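/- Let R be a commutative domain with field of fractions Q, let G be a group acting on R by ring automorphisms, and let F ⊆ G be a finite subset. Let M be an R-bimodule which is flat as a right R-module, and suppose the base change M ⊗_R Q (a left R-module and right Q-module) admits a direct sum decomposition M ⊗_R Q = ⊕_{w∈F} M_w into additive subgroups, each stable under the left R-action and the right Q-action, such that for every w ∈ F, n ∈ M_w and r ∈ R one has n·r = (w·r)·n. Then for every r ∈ R fixed by all elements of F and every m ∈ M, one has r·m = m·r; that is, the left and right actions of the fixed subring coincide on M. -/

import Mathlib

open TensorProduct

/-!
Statement 8: Let `R` be a commutative domain with fraction field `Q`, `G` a group acting on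
`R` by ring automorphisms, and `F ⊆ G` a finite subset.  Let `M` be an `R`-bimodule, flat as
a right `R`-module, such that `M ⊗_R Q` (base change along the right action) decomposes as
`⊕_{w ∈ F} M_w`, with each piece stable under the left `R`-action and the right `Q`-action,
and with `n·r = (w·r)·n` for `n ∈ M_w`.  Then for every `r ∈ R` fixed by all elements of `F`
and every `m ∈ M` we have `r·m = m·r`.

Encoding: the right `R`-module structure on `M` is the `Module R M` instance (the base ring
being commutative); the left `R`-action, commuting with the right one, is encoded as a ring
homomorphism `α : R →+* Module.End R M`.  The base change along the right action is
`Q ⊗[R] M` with its right `Q`-action through the first factor, and the left action of `r` on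
it is `LinearMap.lTensor Q (α r)`.
-/

theorem left_and_right_actions_agree_on_fixed_elements
    {R : Type*} [CommRing R] [IsDomain R]
    {G : Type*} [Group G] [MulSemiringAction G R] (F : Finset G)
    {M : Type*} [AddCommGroup M] [Module R M] [Module.Flat R M]
    (α : R →+* Module.End R M)
    (N : G → Submodule (FractionRing R) (FractionRing R ⊗[R] M))
    (hstab : ∀ w ∈ F, ∀ r : R, ∀ x ∈ N w,
      LinearMap.lTensor (FractionRing R) (α r) x ∈ N w)
    (hint : letI := Classical.decEq G; DirectSum.IsInternal (fun w : F => N w))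
    (hwt : ∀ w ∈ F, ∀ x ∈ N w, ∀ r : R,
      (algebraMap R (FractionRing R) r) • x = LinearMap.lTensor (FractionRing R) (α (w • r)) x) :
    ∀ r : R, (∀ w ∈ F, w • r = r) → ∀ m : M, α r m = r • m := by
  classical
  intro r hr m
  set Q := FractionRing R
  -- the embedding m ↦ 1 ⊗ m is injective since M is flat
  have hinj : Function.Injective (fun m : M => (1 : Q) ⊗ₜ[R] m) := by
    have h1 : Function.Injective (Algebra.linearMap R Q) := IsFractionRing.injective R Q
    have h2 := Module.Flat.rTensor_preserves_injective_linearMap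
      (M := M) (Algebra.linearMap R Q) h1
    have h3 : Function.Injective ((TensorProduct.lid R M).symm : M →ₗ[R] R ⊗[R] M) :=
      (TensorProduct.lid R M).symm.injective
    have : Function.Injective
        ((LinearMap.rTensor M (Algebra.linearMap R Q)) ∘ₗ
          ((TensorProduct.lid R M).symm : M →ₗ[R] R ⊗[R] M)) := h2.comp h3
    convert this using 1
    ext x
    simp [TensorProduct.lid_symm_apply]
  have key : ∀ x : Q ⊗[R] M,
      LinearMap.lTensor Q (α r) x = algebraMap R Q r • x := by
    intro x
    have hx : x ∈ ⨆ w : F, N w := by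
      rw [hint.submodule_iSup_eq_top]; trivial
    refine Submodule.iSup_induction (motive := fun y =>
        LinearMap.lTensor Q (α r) y = algebraMap R Q r • y)
      (fun w : F => N (w : G)) hx ?_ ?_ ?_
    · intro w y hy
      have h := hwt w w.2 y hy r
      rw [hr w w.2] at h
      exact h.symm
    · simp
    · intro a b ha hb
      rw [map_add, ha, hb, smul_add]
  have h := key ((1 : Q) ⊗ₜ[R] m)
  rw [LinearMap.lTensor_tmul, TensorProduct.smul_tmul', smul_eq_mul, mul_one] at h
  apply hinj
  simpa [Algebra.algebraMap_eq_smul_one, TensorProduct.smul_tmul] using h
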